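/- Let μ_b, μ_s ≥ 0, κ_b, β_b > 0, T > 0, M_s ≥ 0, M_{b,0} ≥ 0 and δ₀ ∈ (0,1]. For i = 1,2 let c_i : [0,T] → ℝ be continuous with 0 ≤ c_i(t) ≤ M_s, and let φ_i, y_i : [0,T] → ℝ be differentiable and satisfy φ_i'(t) = −μ_b φ_i(t) y_i(t) − μ_s φ_i(t) c_i(t) and y_i'(t) = κ_b·(φ_i(t)/(1+φ_i(t)))·(1−φ_i(t)) − (μ_b φ_i(t) + β_b)·y_i(t) for all t ∈ [0,T], with common initial data φ₁(0) = φ₂(0) ∈ [δ₀,1] and y₁(0) = y₂(0) ∈ [0, M_{b,0}]. Then there exists a constant C ≥ 0, depending only on μ_b, μ_s, κ_b, β_b, T, M_s and M_{b,0}, such that |φ₁(t) − φ₂(t)| + |y₁(t) − y₂(t)| ≤ C ∫₀ᵗ |c₁(τ) − c₂(τ)| dτ for all t ∈ [0,T]. -/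

import Mathlib

open Set Filter MeasureTheory intervalIntegral Real

lemma mem_nhdsWithin_Ici_of_Ico {T x : ℝ} (hx : x ∈ Set.Ico 0 T) :
    Set.Icc (0:ℝ) T ∈ nhdsWithin x (Set.Ici x) := by
  refine mem_nhdsWithin.mpr ⟨Set.Ioo (x-1) T, isOpen_Ioo, ⟨by linarith [hx.1], hx.2⟩, ?_⟩
  rintro y ⟨⟨_, hy2⟩, hy3⟩
  exact ⟨le_trans hx.1 hy3, le_of_lt hy2⟩

lemma mem_nhdsWithin_Ioi_of_Ico {T x : ℝ} (hx : x ∈ Set.Ico 0 T) :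
    Set.Icc (0:ℝ) T ∈ nhdsWithin x (Set.Ioi x) := by
  refine mem_nhdsWithin.mpr ⟨Set.Ioo (x-1) T, isOpen_Ioo, ⟨by linarith [hx.1], hx.2⟩, ?_⟩
  rintro y ⟨⟨_, hy2⟩, hy3⟩
  exact ⟨le_trans hx.1 (le_of_lt hy3), le_of_lt hy2⟩

lemma mem_nhdsWithin_Iic_of_Ioc {T x : ℝ} (hx : x ∈ Set.Ioc 0 T) :
    Set.Icc (0:ℝ) T ∈ nhdsWithin x (Set.Iic x) := by
  refine mem_nhdsWithin.mpr ⟨Set.Ioo 0 (x+1), isOpen_Ioo, ⟨hx.1, by linarith⟩, ?_⟩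
  rintro y ⟨⟨hy1, _⟩, hy3⟩
  exact ⟨le_of_lt hy1, le_trans hy3 hx.2⟩

lemma primitive_hasDerivWithinAt {g : ℝ → ℝ} {T : ℝ} (hg : ContinuousOn g (Set.Icc 0 T))
    {x : ℝ} (hx : x ∈ Set.Ico 0 T) :
    HasDerivWithinAt (fun t => ∫ τ in (0:ℝ)..t, g τ) (g x) (Set.Ici x) x := by
  have hint : IntervalIntegrable g MeasureTheory.volume 0 x := by
    apply ContinuousOn.intervalIntegrable
    rw [Set.uIcc_of_le hx.1]
    exact hg.mono (Set.Icc_subset_Icc le_rfl hx.2.le)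
  refine intervalIntegral.integral_hasDerivWithinAt_right (t := Set.Ioi x) hint
    ⟨Set.Icc 0 T, mem_nhdsWithin_Ioi_of_Ico hx, hg.aestronglyMeasurable measurableSet_Icc⟩ ?_
  exact (hg x ⟨hx.1, hx.2.le⟩).mono_of_mem_nhdsWithin (mem_nhdsWithin_Ioi_of_Ico hx)

lemma primitive_continuousOn {g : ℝ → ℝ} {T : ℝ} (hT : 0 ≤ T)
    (hg : ContinuousOn g (Set.Icc 0 T)) :
    ContinuousOn (fun t => ∫ τ in (0:ℝ)..t, g τ) (Set.Icc 0 T) := by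
  have hint : IntervalIntegrable g MeasureTheory.volume 0 T := by
    apply ContinuousOn.intervalIntegrable
    rwa [Set.uIcc_of_le hT]
  have := continuousOn_primitive_interval' hint (by rw [Set.uIcc_of_le hT]; exact ⟨le_rfl, hT⟩)
  rwa [Set.uIcc_of_le hT] at this

lemma hasDerivAt_posPart_sq (x : ℝ) : HasDerivAt (fun x : ℝ => max x 0 ^ 2) (2 * max x 0) x := by
  rcases lt_trichotomy x 0 with hx | hx | hx
  · have h0 : HasDerivAt (fun _ : ℝ => (0:ℝ)) 0 x := hasDerivAt_const x 0
    have he : (fun x : ℝ => max x 0 ^ 2) =ᶠ[nhds x] fun _ => (0:ℝ) := by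
      filter_upwards [Iio_mem_nhds hx] with y hy
      rw [max_eq_right (le_of_lt hy)]; ring
    rw [max_eq_right hx.le, mul_zero]
    exact h0.congr_of_eventuallyEq he
  · subst hx
    rw [max_self, mul_zero]
    rw [hasDerivAt_iff_isLittleO]
    rw [Asymptotics.isLittleO_iff]
    intro c hc
    filter_upwards [Metric.ball_mem_nhds (0:ℝ) hc] with y hy
    simp only [Metric.mem_ball, Real.dist_eq, sub_zero] at hy
    have h1 : max y 0 ^ 2 ≤ |y| * |y| := by
      rcases le_or_gt y 0 with h | h
      · rw [max_eq_right h]; have := abs_nonneg y; nlinarith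
      · rw [max_eq_left h.le, sq, abs_of_pos h]
    have h2 : ‖max y 0 ^ 2 - max (0:ℝ) 0 ^ 2 - (y - 0) • (0:ℝ)‖ = max y 0 ^ 2 := by
      simp [abs_of_nonneg (by positivity : (0:ℝ) ≤ max y 0 ^ 2)]
    rw [h2]
    calc max y 0 ^ 2 ≤ |y| * |y| := h1
      _ ≤ c * ‖y - 0‖ := by
          rw [Real.norm_eq_abs, sub_zero]
          exact mul_le_mul_of_nonneg_right hy.le (abs_nonneg _)
  · have h0 : HasDerivAt (fun y : ℝ => y ^ 2) (2 * x) x := by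
      simpa using (hasDerivAt_pow 2 x)
    have he : (fun x : ℝ => max x 0 ^ 2) =ᶠ[nhds x] fun y => y ^ 2 := by
      filter_upwards [Ioi_mem_nhds hx] with y hy
      rw [max_eq_left (le_of_lt hy)]
    rw [max_eq_left hx.le]
    exact h0.congr_of_eventuallyEq he

lemma negG_le_posPart {a : ℝ} (ha : 0 < a) :
    -(a / (1 + a) * (1 - a)) ≤ max (a - 1) 0 := by
  have h1 : (0:ℝ) < 1 + a := by linarith
  have h2 : a / (1 + a) ≤ 1 := by
    rw [div_le_one h1]; linarith
  have h3 : 0 ≤ a / (1 + a) := by positivity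
  rcases le_or_gt 1 a with h | h
  · have : a / (1 + a) * (a - 1) ≤ 1 * (a - 1) :=
      mul_le_mul_of_nonneg_right h2 (by linarith)
    calc -(a / (1 + a) * (1 - a)) = a / (1 + a) * (a - 1) := by ring
      _ ≤ 1 * (a - 1) := this
      _ = a - 1 := one_mul _
      _ ≤ max (a - 1) 0 := le_max_left _ _
  · have : 0 ≤ a / (1 + a) * (1 - a) := mul_nonneg h3 (by linarith)
    calc -(a / (1 + a) * (1 - a)) ≤ 0 := by linarith
      _ ≤ max (a - 1) 0 := le_max_right _ _

lemma G_le_one {a : ℝ} (ha : 0 < a) (ha1 : a ≤ 1) : a / (1 + a) * (1 - a) ≤ 1 := by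
  have h1 : (0:ℝ) < 1 + a := by linarith
  have h2 : a / (1 + a) ≤ 1 := by rw [div_le_one h1]; linarith
  have h3 : 0 ≤ a / (1 + a) := by positivity
  calc a / (1 + a) * (1 - a) ≤ 1 * 1 :=
    mul_le_mul h2 (by linarith) (by linarith) zero_le_one
    _ = 1 := one_mul 1

lemma G_nonneg {a : ℝ} (ha : 0 ≤ a) (ha1 : a ≤ 1) : 0 ≤ a / (1 + a) * (1 - a) := by
  have h1 : (0:ℝ) < 1 + a := by linarith
  have h3 : 0 ≤ a / (1 + a) := by positivity
  exact mul_nonneg h3 (by linarith)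

lemma G_diff_bound {a b : ℝ} (ha : 0 < a) (ha1 : a ≤ 1) (hb : 0 < b) (hb1 : b ≤ 1) :
    |a / (1 + a) * (1 - a) - b / (1 + b) * (1 - b)| ≤ 3 * |a - b| := by
  have h1 : (0:ℝ) < 1 + a := by linarith
  have h2 : (0:ℝ) < 1 + b := by linarith
  have key : a / (1 + a) * (1 - a) - b / (1 + b) * (1 - b)
      = ((a - b) * (1 - a - b - a * b)) / ((1 + a) * (1 + b)) := by
    field_simp
    ring
  rw [key, abs_div, abs_mul]
  have hd : (1:ℝ) ≤ |(1 + a) * (1 + b)| := by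
    rw [abs_of_pos (by positivity)]
    nlinarith
  have hnum : |1 - a - b - a * b| ≤ 3 := by
    rw [abs_le]
    constructor <;> nlinarith
  calc |a - b| * |1 - a - b - a * b| / |(1 + a) * (1 + b)|
      ≤ |a - b| * |1 - a - b - a * b| / 1 := by
        apply div_le_div_of_nonneg_left (by positivity) one_pos hd
      _ = |a - b| * |1 - a - b - a * b| := by rw [div_one]
      _ ≤ |a - b| * 3 := mul_le_mul_of_nonneg_left hnum (abs_nonneg _)
      _ = 3 * |a - b| := by ring

lemma phi_pos_on (μb μs T : ℝ) (hμb : 0 ≤ μb) (hμs : 0 ≤ μs) (hT : 0 < T)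
    (c y φ : ℝ → ℝ) (hc : ContinuousOn c (Set.Icc 0 T)) (hy : ContinuousOn y (Set.Icc 0 T))
    (hφ' : ∀ t ∈ Set.Icc (0:ℝ) T,
      HasDerivWithinAt φ (-(μb * φ t * y t) - μs * φ t * c t) (Set.Icc 0 T) t)
    (hφ0 : 0 < φ 0) : ∀ t ∈ Set.Icc (0:ℝ) T, 0 < φ t := by
  have hφc : ContinuousOn φ (Set.Icc 0 T) := fun t ht => (hφ' t ht).continuousWithinAt
  by_contra hcon
  push_neg at hcon
  obtain ⟨t₀, ht₀, ht₀le⟩ := hcon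
  have hIVT : (0:ℝ) ∈ Set.Icc (φ t₀) (φ 0) := ⟨ht₀le, hφ0.le⟩
  have himg := intermediate_value_Icc' ht₀.1 (hφc.mono (Set.Icc_subset_Icc le_rfl ht₀.2))
  obtain ⟨t₁, ht₁, hφt₁⟩ := himg hIVT
  have ht₁T : t₁ ≤ T := le_trans ht₁.2 ht₀.2
  -- bounds
  obtain ⟨By, hBy⟩ := isCompact_Icc.exists_bound_of_continuousOn hy
  obtain ⟨Bc, hBc⟩ := isCompact_Icc.exists_bound_of_continuousOn hc
  set Kr : ℝ := μb * By + μs * Bc with hKr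
  set a : ℝ → ℝ := fun t => if t ∈ Set.Icc (0:ℝ) T then -(μb * y t + μs * c t) else 0 with ha
  have habs : ∀ t, |a t| ≤ max Kr 0 := by
    intro t
    by_cases ht : t ∈ Set.Icc (0:ℝ) T
    · simp only [ha, if_pos ht]
      have h1 := hBy t ht
      have h2 := hBc t ht
      rw [Real.norm_eq_abs] at h1 h2
      have : |-(μb * y t + μs * c t)| ≤ μb * |y t| + μs * |c t| := by
        rw [abs_neg]
        calc |μb * y t + μs * c t| ≤ |μb * y t| + |μs * c t| := abs_add_le _ _
          _ = μb * |y t| + μs * |c t| := by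
            rw [abs_mul, abs_mul, abs_of_nonneg hμb, abs_of_nonneg hμs]
      refine this.trans (le_max_of_le_left ?_)
      have := abs_nonneg (y t)
      have := abs_nonneg (c t)
      apply add_le_add (mul_le_mul_of_nonneg_left h1 hμb) (mul_le_mul_of_nonneg_left h2 hμs)
    · simp only [ha, if_neg ht, abs_zero, le_max_iff]
      right; rfl
  set v : ℝ → ℝ → ℝ := fun t x => a t * x with hv
  have hlip : ∀ t, LipschitzOnWith (Real.toNNReal (max Kr 0)) (v t) Set.univ := by
    intro t
    apply LipschitzWith.lipschitzOnWith
    have h1 : LipschitzWith ‖a t‖₊ (fun x : ℝ => a t • x) := lipschitzWith_smul (a t)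
    have h2 : ‖a t‖₊ ≤ Real.toNNReal (max Kr 0) := by
      apply NNReal.coe_le_coe.mp
      rw [coe_nnnorm, Real.norm_eq_abs, Real.coe_toNNReal']
      exact le_max_of_le_left (habs t)
    exact (h1.weaken h2)
  have huniq := ODE_solution_unique_of_mem_Icc_left (v := v) (s := fun _ => Set.univ)
    (K := Real.toNNReal (max Kr 0)) (fun t _ => hlip t)
    (f := φ) (g := fun _ => (0:ℝ)) (a := 0) (b := t₁)
    (hφc.mono (Set.Icc_subset_Icc le_rfl ht₁T))
    (fun t ht => by
      have htI : t ∈ Set.Icc (0:ℝ) T := ⟨ht.1.le, le_trans ht.2 ht₁T⟩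
      have hd := (hφ' t htI).mono_of_mem_nhdsWithin
        (mem_nhdsWithin_Iic_of_Ioc ⟨ht.1, htI.2⟩)
      convert hd using 1
      simp only [hv, ha, if_pos htI]
      ring)
    (fun t _ => Set.mem_univ _)
    continuousOn_const
    (fun t ht => by
      have : v t 0 = 0 := by simp [hv]
      rw [this]
      exact hasDerivWithinAt_const t _ 0)
    (fun t _ => Set.mem_univ _)
    hφt₁
  have h0 : φ 0 = 0 := huniq ⟨le_rfl, ht₁.1⟩
  rw [h0] at hφ0
  exact lt_irrefl 0 hφ0

lemma invariant_on (μb μs κb βb T : ℝ) (hμb : 0 ≤ μb) (hμs : 0 ≤ μs)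
    (hκb : 0 < κb) (hβb : 0 < βb) (hT : 0 < T)
    (c y φ : ℝ → ℝ)
    (hc0 : ∀ t ∈ Set.Icc (0:ℝ) T, 0 ≤ c t)
    (hφ' : ∀ t ∈ Set.Icc (0:ℝ) T,
      HasDerivWithinAt φ (-(μb * φ t * y t) - μs * φ t * c t) (Set.Icc 0 T) t)
    (hy' : ∀ t ∈ Set.Icc (0:ℝ) T,
      HasDerivWithinAt y
        (κb * (φ t / (1 + φ t)) * (1 - φ t) - (μb * φ t + βb) * y t) (Set.Icc 0 T) t)
    (hφpos : ∀ t ∈ Set.Icc (0:ℝ) T, 0 < φ t)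
    (hφ0 : φ 0 ≤ 1) (hy0 : 0 ≤ y 0) :
    ∀ t ∈ Set.Icc (0:ℝ) T, φ t ≤ 1 ∧ 0 ≤ y t := by
  have hφc : ContinuousOn φ (Set.Icc 0 T) := fun t ht => (hφ' t ht).continuousWithinAt
  have hyc : ContinuousOn y (Set.Icc 0 T) := fun t ht => (hy' t ht).continuousWithinAt
  obtain ⟨R, hR⟩ := isCompact_Icc.exists_bound_of_continuousOn hφc
  have hR0 : 0 ≤ R := le_trans (norm_nonneg _) (hR 0 ⟨le_rfl, hT.le⟩)
  set K : ℝ := μb * R + κb with hK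
  have hK0 : 0 ≤ K := by positivity
  set V : ℝ → ℝ := fun t => max (φ t - 1) 0 ^ 2 + max (-(y t)) 0 ^ 2 with hV
  set V' : ℝ → ℝ := fun t =>
    2 * max (φ t - 1) 0 * (-(μb * φ t * y t) - μs * φ t * c t)
    + 2 * max (-(y t)) 0 *
      (-(κb * (φ t / (1 + φ t)) * (1 - φ t) - (μb * φ t + βb) * y t)) with hV'def
  have hcont2 : Continuous fun z : ℝ => max z 0 ^ 2 :=
    (continuous_id.max continuous_const).pow 2
  have hVc : ContinuousOn V (Set.Icc 0 T) :=
    (hcont2.comp_continuousOn (hφc.sub continuousOn_const)).add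
      (hcont2.comp_continuousOn hyc.neg)
  have hVd : ∀ x ∈ Set.Ico (0:ℝ) T, HasDerivWithinAt V (V' x) (Set.Ici x) x := by
    intro x hx
    have hxI : x ∈ Set.Icc (0:ℝ) T := ⟨hx.1, hx.2.le⟩
    have hφI := (hφ' x hxI).mono_of_mem_nhdsWithin (mem_nhdsWithin_Ici_of_Ico hx)
    have hyI := (hy' x hxI).mono_of_mem_nhdsWithin (mem_nhdsWithin_Ici_of_Ico hx)
    have h1 : HasDerivWithinAt (fun t => max (φ t - 1) 0 ^ 2)
        (2 * max (φ x - 1) 0 * (-(μb * φ x * y x) - μs * φ x * c x)) (Set.Ici x) x :=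
      by have := (hasDerivAt_posPart_sq (φ x - 1)).comp_hasDerivWithinAt x (hφI.sub_const 1); exact this
    have h2 : HasDerivWithinAt (fun t => max (-(y t)) 0 ^ 2)
        (2 * max (-(y x)) 0 *
          (-(κb * (φ x / (1 + φ x)) * (1 - φ x) - (μb * φ x + βb) * y x))) (Set.Ici x) x :=
      by have := (hasDerivAt_posPart_sq (-(y x))).comp_hasDerivWithinAt x hyI.neg; exact this
    exact h1.add h2
  have hVle : ∀ x ∈ Set.Ico (0:ℝ) T, V' x ≤ K * V x := by
    intro x hx
    have hxI : x ∈ Set.Icc (0:ℝ) T := ⟨hx.1, hx.2.le⟩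
    set p : ℝ := max (φ x - 1) 0 with hp
    set q : ℝ := max (-(y x)) 0 with hq
    have hp0 : 0 ≤ p := le_max_right _ _
    have hq0 : 0 ≤ q := le_max_right _ _
    have hyq : -(y x) ≤ q := le_max_left _ _
    have hφx : 0 < φ x := hφpos x hxI
    have hφR : φ x ≤ R := le_trans (le_abs_self _) (by rw [← Real.norm_eq_abs]; exact hR x hxI)
    have hcx : 0 ≤ c x := hc0 x hxI
    have hT1 : 2 * p * (-(μb * φ x * y x) - μs * φ x * c x) ≤ 2 * μb * R * (p * q) := by
      rcases le_or_gt (φ x - 1) 0 with h | h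
      · rw [hp, max_eq_right h]
        simp
      · rw [hp, max_eq_left h.le]
        have e1 : -(μb * φ x * y x) ≤ μb * R * q := by
          have h1 : μb * φ x * (-(y x)) ≤ μb * φ x * q :=
            mul_le_mul_of_nonneg_left hyq (by positivity)
          have h2 : μb * φ x * q ≤ μb * R * q :=
            mul_le_mul_of_nonneg_right (mul_le_mul_of_nonneg_left hφR hμb) hq0
          calc -(μb * φ x * y x) = μb * φ x * (-(y x)) := by ring
            _ ≤ μb * φ x * q := h1
            _ ≤ μb * R * q := h2
        have e2 : -(μs * φ x * c x) ≤ 0 := by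
          have : 0 ≤ μs * φ x * c x := by positivity
          linarith
        calc 2 * (φ x - 1) * (-(μb * φ x * y x) - μs * φ x * c x)
            ≤ 2 * (φ x - 1) * (μb * R * q + 0) := by
              apply mul_le_mul_of_nonneg_left _ (by linarith : (0:ℝ) ≤ 2 * (φ x - 1))
              have := add_le_add e1 e2
              linarith
          _ = 2 * μb * R * ((φ x - 1) * q) := by ring
    have hT2 : 2 * q * (-(κb * (φ x / (1 + φ x)) * (1 - φ x) - (μb * φ x + βb) * y x))
        ≤ 2 * κb * (p * q) := by
      rcases le_or_gt (-(y x)) 0 with h | h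
      · rw [hq, max_eq_right h]
        simp
      · rw [hq, max_eq_left h.le]
        have hG := negG_le_posPart hφx
        rw [← hp] at hG
        have hy_neg : y x < 0 := by linarith
        have h2 : (μb * φ x + βb) * y x ≤ 0 :=
          mul_nonpos_of_nonneg_of_nonpos (by positivity) hy_neg.le
        nlinarith [mul_le_mul_of_nonneg_left hG hκb.le]
    have h2pq : 2 * (p * q) ≤ p ^ 2 + q ^ 2 := by nlinarith [sq_nonneg (p - q)]
    calc V' x ≤ 2 * μb * R * (p * q) + 2 * κb * (p * q) := add_le_add hT1 hT2
      _ = (μb * R + κb) * (2 * (p * q)) := by ring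
      _ ≤ (μb * R + κb) * (p ^ 2 + q ^ 2) := by
          apply mul_le_mul_of_nonneg_left h2pq (by positivity)
      _ = K * V x := by rw [hK, hV]
  have hV0 : V 0 = 0 := by
    simp only [hV]
    rw [max_eq_right (by linarith : φ 0 - 1 ≤ 0), max_eq_right (by linarith : -(y 0) ≤ 0)]
    norm_num
  -- Gronwall ε-argument
  have hVzero : ∀ t ∈ Set.Icc (0:ℝ) T, V t ≤ 0 := by
    intro t ht
    have main : ∀ ε : ℝ, 0 < ε → V t ≤ ε * Real.exp ((K + 1) * t) := by
      intro ε hε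
      have hB : ∀ x : ℝ, HasDerivAt (fun s => ε * Real.exp ((K + 1) * s))
          (ε * (Real.exp ((K + 1) * x) * (K + 1))) x := by
        intro x
        have hin : HasDerivAt (fun s : ℝ => (K + 1) * s) (K + 1) x := by
          simpa using (hasDerivAt_id x).const_mul (K + 1)
        exact (hin.exp).const_mul ε
      refine image_le_of_deriv_right_lt_deriv_boundary hVc hVd ?_ hB ?_ ht
      · rw [hV0]; positivity
      · intro x hx hVB
        have hpos : 0 < ε * Real.exp ((K + 1) * x) := by positivity
        calc V' x ≤ K * V x := hVle x hx
          _ = K * (ε * Real.exp ((K + 1) * x)) := by rw [hVB]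
          _ < (K + 1) * (ε * Real.exp ((K + 1) * x)) := by nlinarith
          _ = ε * (Real.exp ((K + 1) * x) * (K + 1)) := by ring
    by_contra hVt
    push_neg at hVt
    have hE : Real.exp ((K + 1) * t) ≤ Real.exp ((K + 1) * T) :=
      Real.exp_le_exp.mpr (mul_le_mul_of_nonneg_left ht.2 (by linarith))
    have hEpos : 0 < Real.exp ((K + 1) * T) := Real.exp_pos _
    have h3 := main (V t / (2 * Real.exp ((K + 1) * T))) (by positivity)
    have h4 : V t / (2 * Real.exp ((K + 1) * T)) * Real.exp ((K + 1) * t)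
        ≤ V t / (2 * Real.exp ((K + 1) * T)) * Real.exp ((K + 1) * T) :=
      mul_le_mul_of_nonneg_left hE (by positivity)
    have h5 : V t / (2 * Real.exp ((K + 1) * T)) * Real.exp ((K + 1) * T) = V t / 2 := by
      field_simp
    have h6 : V t ≤ V t / 2 := h3.trans (h4.trans_eq h5)
    exact absurd h6 (not_le.mpr (half_lt_self hVt))
  intro t ht
  have hVt := hVzero t ht
  have hs1 : (0:ℝ) ≤ max (φ t - 1) 0 ^ 2 := sq_nonneg _
  have hs2 : (0:ℝ) ≤ max (-(y t)) 0 ^ 2 := sq_nonneg _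
  have hVtdef : max (φ t - 1) 0 ^ 2 + max (-(y t)) 0 ^ 2 ≤ 0 := hVt
  have hp0 : max (φ t - 1) 0 ^ 2 = 0 := le_antisymm (by linarith) hs1
  have hq0 : max (-(y t)) 0 ^ 2 = 0 := le_antisymm (by linarith) hs2
  have hpz : max (φ t - 1) 0 = 0 := by
    have := pow_eq_zero_iff (n := 2) (by norm_num) |>.mp hp0
    exact this
  have hqz : max (-(y t)) 0 = 0 := by
    have := pow_eq_zero_iff (n := 2) (by norm_num) |>.mp hq0
    exact this
  constructor
  · have : φ t - 1 ≤ max (φ t - 1) 0 := le_max_left _ _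
    linarith [this.trans_eq hpz]
  · have : -(y t) ≤ max (-(y t)) 0 := le_max_left _ _
    linarith [this.trans_eq hqz]

lemma y_le_bound_on (μb κb βb T Mb0 : ℝ) (hμb : 0 ≤ μb) (hκb : 0 < κb) (hβb : 0 < βb)
    (hT : 0 < T) (hMb0 : 0 ≤ Mb0)
    (φ y : ℝ → ℝ)
    (hy' : ∀ t ∈ Set.Icc (0:ℝ) T,
      HasDerivWithinAt y
        (κb * (φ t / (1 + φ t)) * (1 - φ t) - (μb * φ t + βb) * y t) (Set.Icc 0 T) t)
    (hφb : ∀ t ∈ Set.Icc (0:ℝ) T, 0 < φ t ∧ φ t ≤ 1)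
    (hy0 : y 0 ≤ Mb0) :
    ∀ t ∈ Set.Icc (0:ℝ) T, y t ≤ max Mb0 (κb / βb) := by
  have hyc : ContinuousOn y (Set.Icc 0 T) := fun t ht => (hy' t ht).continuousWithinAt
  set My : ℝ := max Mb0 (κb / βb) with hMy
  have hMy0 : 0 ≤ My := le_trans hMb0 (le_max_left _ _)
  have hκMy : κb ≤ βb * My := by
    have : κb / βb ≤ My := le_max_right _ _
    calc κb = βb * (κb / βb) := by field_simp
      _ ≤ βb * My := mul_le_mul_of_nonneg_left this hβb.le
  intro t ht
  have main : ∀ ε : ℝ, 0 < ε → y t ≤ My + ε := by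
    intro ε hε
    refine image_le_of_deriv_right_lt_deriv_boundary (f := y)
      (f' := fun s => κb * (φ s / (1 + φ s)) * (1 - φ s) - (μb * φ s + βb) * y s)
      (B := fun _ => My + ε) (B' := fun _ => 0) hyc
      (fun x hx => (hy' x ⟨hx.1, hx.2.le⟩).mono_of_mem_nhdsWithin
        (mem_nhdsWithin_Ici_of_Ico hx))
      (show y 0 ≤ My + ε by have : Mb0 ≤ My := le_max_left _ _; linarith)
      (fun x => hasDerivAt_const x _) ?_ ht
    intro x hx hyx
    have hxI : x ∈ Set.Icc (0:ℝ) T := ⟨hx.1, hx.2.le⟩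
    obtain ⟨hφp, hφ1⟩ := hφb x hxI
    have hG : κb * (φ x / (1 + φ x)) * (1 - φ x) ≤ κb := by
      have := G_le_one hφp hφ1
      calc κb * (φ x / (1 + φ x)) * (1 - φ x) = κb * (φ x / (1 + φ x) * (1 - φ x)) := by ring
        _ ≤ κb * 1 := mul_le_mul_of_nonneg_left this hκb.le
        _ = κb := mul_one _
    have hterm : βb * (My + ε) ≤ (μb * φ x + βb) * y x := by
      rw [hyx]
      apply mul_le_mul_of_nonneg_right _ (by linarith)
      nlinarith
    have : κb * (φ x / (1 + φ x)) * (1 - φ x) - (μb * φ x + βb) * y x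
        ≤ κb - βb * (My + ε) := by linarith
    calc κb * (φ x / (1 + φ x)) * (1 - φ x) - (μb * φ x + βb) * y x
        ≤ κb - βb * (My + ε) := this
      _ < 0 := by nlinarith
  exact le_of_forall_pos_le_add main

lemma abs_mul_mul_le {a b c M : ℝ} (ha : 0 ≤ a) (hM : |b| ≤ M) :
    |a * (b * c)| ≤ a * M * |c| := by
  rw [abs_mul, abs_mul]
  rw [abs_of_nonneg ha]
  have h1 : |b| * |c| ≤ M * |c| := mul_le_mul_of_nonneg_right hM (abs_nonneg c)
  calc a * (|b| * |c|) ≤ a * (M * |c|) := mul_le_mul_of_nonneg_left h1 ha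
    _ = a * M * |c| := by ring

set_option maxHeartbeats 1600000 in
/-- Lipschitz dependence of the ODE subsystem (φ, y) on the driving
soluble-MMP concentration c: there is a constant C ≥ 0 depending only on
μ_b, μ_s, κ_b, β_b, T, M_s and M_{b,0} such that for any two driving functions
c₁, c₂ with values in [0, M_s] and corresponding solutions (φᵢ, yᵢ) with common
initial data φ₁(0) = φ₂(0) ∈ [δ₀,1], y₁(0) = y₂(0) ∈ [0, M_{b,0}], one has
|φ₁(t) − φ₂(t)| + |y₁(t) − y₂(t)| ≤ C ∫₀ᵗ |c₁ − c₂| for all t ∈ [0,T]. -/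
theorem ode_subsystem_stability
    (μb μs κb βb T Ms Mb0 : ℝ)
    (hμb : 0 ≤ μb) (hμs : 0 ≤ μs) (hκb : 0 < κb) (hβb : 0 < βb)
    (hT : 0 < T) (hMs : 0 ≤ Ms) (hMb0 : 0 ≤ Mb0) :
    ∃ C : ℝ, 0 ≤ C ∧
      ∀ δ₀ : ℝ, 0 < δ₀ → δ₀ ≤ 1 →
      ∀ c₁ c₂ φ₁ φ₂ y₁ y₂ : ℝ → ℝ,
        ContinuousOn c₁ (Set.Icc 0 T) → ContinuousOn c₂ (Set.Icc 0 T) →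
        (∀ t ∈ Set.Icc (0 : ℝ) T, 0 ≤ c₁ t ∧ c₁ t ≤ Ms) →
        (∀ t ∈ Set.Icc (0 : ℝ) T, 0 ≤ c₂ t ∧ c₂ t ≤ Ms) →
        (∀ t ∈ Set.Icc (0 : ℝ) T,
          HasDerivWithinAt φ₁ (-(μb * φ₁ t * y₁ t) - μs * φ₁ t * c₁ t)
            (Set.Icc 0 T) t) →
        (∀ t ∈ Set.Icc (0 : ℝ) T,
          HasDerivWithinAt φ₂ (-(μb * φ₂ t * y₂ t) - μs * φ₂ t * c₂ t)
            (Set.Icc 0 T) t) →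
        (∀ t ∈ Set.Icc (0 : ℝ) T,
          HasDerivWithinAt y₁
            (κb * (φ₁ t / (1 + φ₁ t)) * (1 - φ₁ t) - (μb * φ₁ t + βb) * y₁ t)
            (Set.Icc 0 T) t) →
        (∀ t ∈ Set.Icc (0 : ℝ) T,
          HasDerivWithinAt y₂
            (κb * (φ₂ t / (1 + φ₂ t)) * (1 - φ₂ t) - (μb * φ₂ t + βb) * y₂ t)
            (Set.Icc 0 T) t) →
        φ₁ 0 = φ₂ 0 → φ₁ 0 ∈ Set.Icc δ₀ 1 →
        y₁ 0 = y₂ 0 → y₁ 0 ∈ Set.Icc (0 : ℝ) Mb0 →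
        ∀ t ∈ Set.Icc (0 : ℝ) T,
          |φ₁ t - φ₂ t| + |y₁ t - y₂ t| ≤ C * ∫ τ in (0 : ℝ)..t, |c₁ τ - c₂ τ| := by
  classical
  set My : ℝ := max Mb0 (κb / βb) with hMy
  have hMy0 : 0 ≤ My := le_trans hMb0 (le_max_left _ _)
  set K₀ : ℝ := μb * (1 + My) + μs * Ms + 3 * κb + βb with hK₀
  have hK₀0 : 0 ≤ K₀ := by positivity
  set K : ℝ := K₀ + 1 with hKdef
  have hK0 : 0 ≤ K := by positivity
  set C : ℝ := 2 * μs * Real.exp (K * T) with hC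
  refine ⟨C, by positivity, ?_⟩
  intro δ₀ hδ₀ hδ₁ c₁ c₂ φ₁ φ₂ y₁ y₂ hc₁ hc₂ hc₁b hc₂b hφ₁' hφ₂' hy₁' hy₂'
    hφeq hφ0mem hyeq hy0mem
  have hy₁c : ContinuousOn y₁ (Set.Icc 0 T) := fun t ht => (hy₁' t ht).continuousWithinAt
  have hy₂c : ContinuousOn y₂ (Set.Icc 0 T) := fun t ht => (hy₂' t ht).continuousWithinAt
  have hφ₁c : ContinuousOn φ₁ (Set.Icc 0 T) := fun t ht => (hφ₁' t ht).continuousWithinAt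
  have hφ₂c : ContinuousOn φ₂ (Set.Icc 0 T) := fun t ht => (hφ₂' t ht).continuousWithinAt
  -- invariant bounds
  have hφ₁pos : ∀ t ∈ Set.Icc (0:ℝ) T, 0 < φ₁ t :=
    phi_pos_on μb μs T hμb hμs hT c₁ y₁ φ₁ hc₁ hy₁c hφ₁' (lt_of_lt_of_le hδ₀ hφ0mem.1)
  have hφ₂pos : ∀ t ∈ Set.Icc (0:ℝ) T, 0 < φ₂ t :=
    phi_pos_on μb μs T hμb hμs hT c₂ y₂ φ₂ hc₂ hy₂c hφ₂'
      (hφeq ▸ lt_of_lt_of_le hδ₀ hφ0mem.1)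
  have hinv₁ : ∀ t ∈ Set.Icc (0:ℝ) T, φ₁ t ≤ 1 ∧ 0 ≤ y₁ t :=
    invariant_on μb μs κb βb T hμb hμs hκb hβb hT c₁ y₁ φ₁
      (fun t ht => (hc₁b t ht).1) hφ₁' hy₁' hφ₁pos hφ0mem.2 hy0mem.1
  have hinv₂ : ∀ t ∈ Set.Icc (0:ℝ) T, φ₂ t ≤ 1 ∧ 0 ≤ y₂ t :=
    invariant_on μb μs κb βb T hμb hμs hκb hβb hT c₂ y₂ φ₂
      (fun t ht => (hc₂b t ht).1) hφ₂' hy₂' hφ₂pos (hφeq ▸ hφ0mem.2) (hyeq ▸ hy0mem.1)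
  have hy₁b : ∀ t ∈ Set.Icc (0:ℝ) T, y₁ t ≤ My :=
    y_le_bound_on μb κb βb T Mb0 hμb hκb hβb hT hMb0 φ₁ y₁ hy₁'
      (fun t ht => ⟨hφ₁pos t ht, (hinv₁ t ht).1⟩) hy0mem.2
  have hy₂b : ∀ t ∈ Set.Icc (0:ℝ) T, y₂ t ≤ My :=
    y_le_bound_on μb κb βb T Mb0 hμb hκb hβb hT hMb0 φ₂ y₂ hy₂'
      (fun t ht => ⟨hφ₂pos t ht, (hinv₂ t ht).1⟩) (hyeq ▸ hy0mem.2)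
  -- the difference system
  set g : ℝ → ℝ := fun t => |c₁ t - c₂ t| with hg
  have hgc : ContinuousOn g (Set.Icc 0 T) := (hc₁.sub hc₂).abs
  have hgnn : ∀ t, t ∈ Set.Icc (0:ℝ) T → 0 ≤ g t := fun t _ => abs_nonneg _
  set P : ℝ → ℝ := fun t => ∫ τ in (0:ℝ)..t, g τ with hP
  have hPc : ContinuousOn P (Set.Icc 0 T) := primitive_continuousOn hT.le hgc
  have hPnn : ∀ t ∈ Set.Icc (0:ℝ) T, 0 ≤ P t := by
    intro t ht
    exact intervalIntegral.integral_nonneg ht.1 (fun u _ => abs_nonneg _)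
  set f : ℝ → ℝ × ℝ := fun t => (φ₁ t - φ₂ t, y₁ t - y₂ t) with hf
  have hfc : ContinuousOn f (Set.Icc 0 T) := (hφ₁c.sub hφ₂c).prodMk (hy₁c.sub hy₂c)
  intro t ht
  have key : ∀ ε : ℝ, 0 < ε →
      ‖f t‖ ≤ μs * Real.exp (K * t) * P t + ε * Real.exp (K * t) := by
    intro ε hε
    set B : ℝ → ℝ := fun s => μs * Real.exp (K * s) * P s + ε * Real.exp (K * s) with hB
    set B' : ℝ → ℝ := fun s => μs * (Real.exp (K * s) * K) * P s
      + μs * Real.exp (K * s) * g s + ε * (Real.exp (K * s) * K) with hB'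
    have hexp : ∀ x : ℝ, HasDerivAt (fun s => Real.exp (K * s)) (Real.exp (K * x) * K) x := by
      intro x
      have hin : HasDerivAt (fun s : ℝ => K * s) K x := by
        simpa using (hasDerivAt_id x).const_mul K
      exact hin.exp
    have hBc : ContinuousOn B (Set.Icc 0 T) := by
      apply ContinuousOn.add
      · exact ((continuous_const.mul
          (Real.continuous_exp.comp (continuous_const.mul continuous_id))).continuousOn).mul hPc
      · exact (continuous_const.mul
          (Real.continuous_exp.comp (continuous_const.mul continuous_id))).continuousOn
    have hBd : ∀ x ∈ Set.Ico (0:ℝ) T, HasDerivWithinAt B (B' x) (Set.Ici x) x := by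
      intro x hx
      have h1 : HasDerivWithinAt (fun s => μs * Real.exp (K * s)) (μs * (Real.exp (K * x) * K))
          (Set.Ici x) x := ((hexp x).const_mul μs).hasDerivWithinAt
      have h2 : HasDerivWithinAt P (g x) (Set.Ici x) x := primitive_hasDerivWithinAt hgc hx
      have h3 := h1.mul h2
      have h4 : HasDerivWithinAt (fun s => ε * Real.exp (K * s)) (ε * (Real.exp (K * x) * K))
          (Set.Ici x) x := ((hexp x).const_mul ε).hasDerivWithinAt
      have h5 := h3.add h4
      exact h5
    have hfd : ∀ x ∈ Set.Ico (0:ℝ) T, HasDerivWithinAt f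
        ((-(μb * φ₁ x * y₁ x) - μs * φ₁ x * c₁ x) - (-(μb * φ₂ x * y₂ x) - μs * φ₂ x * c₂ x),
         (κb * (φ₁ x / (1 + φ₁ x)) * (1 - φ₁ x) - (μb * φ₁ x + βb) * y₁ x)
           - (κb * (φ₂ x / (1 + φ₂ x)) * (1 - φ₂ x) - (μb * φ₂ x + βb) * y₂ x))
        (Set.Ici x) x := by
      intro x hx
      have hxI : x ∈ Set.Icc (0:ℝ) T := ⟨hx.1, hx.2.le⟩
      have m := mem_nhdsWithin_Ici_of_Ico hx
      exact (((hφ₁' x hxI).mono_of_mem_nhdsWithin m).sub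
          ((hφ₂' x hxI).mono_of_mem_nhdsWithin m)).prodMk
        (((hy₁' x hxI).mono_of_mem_nhdsWithin m).sub
          ((hy₂' x hxI).mono_of_mem_nhdsWithin m))
    have ha0 : ‖f 0‖ ≤ B 0 := by
      have hf0 : f 0 = (0, 0) := by
        simp only [hf, Prod.mk.injEq]
        constructor <;> [linarith [hφeq]; linarith [hyeq]]
      have hP0 : P 0 = 0 := intervalIntegral.integral_same
      rw [hf0]
      simp only [hB, hP0, mul_zero, Real.exp_zero]
      simp only [Prod.norm_def, norm_zero, max_self]
      nlinarith
    have bound : ∀ x ∈ Set.Ico (0:ℝ) T, ‖f x‖ = B x →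
        ‖((-(μb * φ₁ x * y₁ x) - μs * φ₁ x * c₁ x) - (-(μb * φ₂ x * y₂ x) - μs * φ₂ x * c₂ x),
          (κb * (φ₁ x / (1 + φ₁ x)) * (1 - φ₁ x) - (μb * φ₁ x + βb) * y₁ x)
            - (κb * (φ₂ x / (1 + φ₂ x)) * (1 - φ₂ x) - (μb * φ₂ x + βb) * y₂ x))‖ < B' x := by
      intro x hx hcontact
      have hxI : x ∈ Set.Icc (0:ℝ) T := ⟨hx.1, hx.2.le⟩
      set u : ℝ := φ₁ x - φ₂ x with hu
      set w : ℝ := y₁ x - y₂ x with hw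
      have huB : |u| ≤ B x := by
        rw [← hcontact]
        calc |u| = ‖(f x).1‖ := by rw [Real.norm_eq_abs]
          _ ≤ ‖f x‖ := by rw [Prod.norm_def]; exact le_max_left _ _
      have hwB : |w| ≤ B x := by
        rw [← hcontact]
        calc |w| = ‖(f x).2‖ := by rw [Real.norm_eq_abs]
          _ ≤ ‖f x‖ := by rw [Prod.norm_def]; exact le_max_right _ _
      have hφ₁x := hφ₁pos x hxI
      have hφ₂x := hφ₂pos x hxI
      have hφ₁1 := (hinv₁ x hxI).1
      have hφ₂1 := (hinv₂ x hxI).1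
      have hy₂nn := (hinv₂ x hxI).2
      have hy₂M := hy₂b x hxI
      have hc₂x := hc₂b x hxI
      -- estimate first component
      have hu' : |(-(μb * φ₁ x * y₁ x) - μs * φ₁ x * c₁ x)
          - (-(μb * φ₂ x * y₂ x) - μs * φ₂ x * c₂ x)|
          ≤ μb * |w| + μb * My * |u| + μs * g x + μs * Ms * |u| := by
        have e : (-(μb * φ₁ x * y₁ x) - μs * φ₁ x * c₁ x)
            - (-(μb * φ₂ x * y₂ x) - μs * φ₂ x * c₂ x)
            = -(μb * (φ₁ x * w) + μb * (y₂ x * u)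
                + μs * (φ₁ x * (c₁ x - c₂ x)) + μs * (c₂ x * u)) := by
          simp only [hu, hw]; ring
        rw [e, abs_neg]
        have hφ₁abs : |φ₁ x| ≤ 1 := by rw [abs_of_pos hφ₁x]; exact hφ₁1
        have hy₂abs : |y₂ x| ≤ My := by rw [abs_of_nonneg hy₂nn]; exact hy₂M
        have hc₂abs : |c₂ x| ≤ Ms := by rw [abs_of_nonneg hc₂x.1]; exact hc₂x.2
        have t1 : |μb * (φ₁ x * w)| ≤ μb * |w| := by
          have := abs_mul_mul_le hμb hφ₁abs (c := w)
          linarith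
        have t2 : |μb * (y₂ x * u)| ≤ μb * My * |u| := abs_mul_mul_le hμb hy₂abs
        have t3 : |μs * (φ₁ x * (c₁ x - c₂ x))| ≤ μs * g x := by
          have h1 := abs_mul_mul_le hμs hφ₁abs (c := c₁ x - c₂ x)
          have h2 : |c₁ x - c₂ x| = g x := rfl
          rw [h2] at h1
          linarith
        have t4 : |μs * (c₂ x * u)| ≤ μs * Ms * |u| := abs_mul_mul_le hμs hc₂abs
        calc |μb * (φ₁ x * w) + μb * (y₂ x * u) + μs * (φ₁ x * (c₁ x - c₂ x)) + μs * (c₂ x * u)|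
            ≤ |μb * (φ₁ x * w) + μb * (y₂ x * u) + μs * (φ₁ x * (c₁ x - c₂ x))| + |μs * (c₂ x * u)| := abs_add_le _ _
          _ ≤ |μb * (φ₁ x * w) + μb * (y₂ x * u)| + |μs * (φ₁ x * (c₁ x - c₂ x))| + |μs * (c₂ x * u)| := by
              linarith [abs_add_le (μb * (φ₁ x * w) + μb * (y₂ x * u)) (μs * (φ₁ x * (c₁ x - c₂ x)))]
          _ ≤ |μb * (φ₁ x * w)| + |μb * (y₂ x * u)| + |μs * (φ₁ x * (c₁ x - c₂ x))| + |μs * (c₂ x * u)| := by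
              linarith [abs_add_le (μb * (φ₁ x * w)) (μb * (y₂ x * u))]
          _ ≤ μb * |w| + μb * My * |u| + μs * g x + μs * Ms * |u| := by linarith
      -- estimate second component
      have hw' : |(κb * (φ₁ x / (1 + φ₁ x)) * (1 - φ₁ x) - (μb * φ₁ x + βb) * y₁ x)
          - (κb * (φ₂ x / (1 + φ₂ x)) * (1 - φ₂ x) - (μb * φ₂ x + βb) * y₂ x)|
          ≤ 3 * κb * |u| + μb * |w| + μb * My * |u| + βb * |w| := by
        have e : (κb * (φ₁ x / (1 + φ₁ x)) * (1 - φ₁ x) - (μb * φ₁ x + βb) * y₁ x)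
            - (κb * (φ₂ x / (1 + φ₂ x)) * (1 - φ₂ x) - (μb * φ₂ x + βb) * y₂ x)
            = κb * (φ₁ x / (1 + φ₁ x) * (1 - φ₁ x) - φ₂ x / (1 + φ₂ x) * (1 - φ₂ x))
              + (-(μb * (φ₁ x * w)) - μb * (y₂ x * u) - βb * w) := by
          simp only [hu, hw]; ring
        rw [e]
        have t1 : |κb * (φ₁ x / (1 + φ₁ x) * (1 - φ₁ x) - φ₂ x / (1 + φ₂ x) * (1 - φ₂ x))|
            ≤ 3 * κb * |u| := by
          rw [abs_mul, abs_of_pos hκb]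
          have hGd := G_diff_bound hφ₁x hφ₁1 hφ₂x hφ₂1
          rw [← hu] at hGd
          calc κb * |φ₁ x / (1 + φ₁ x) * (1 - φ₁ x) - φ₂ x / (1 + φ₂ x) * (1 - φ₂ x)|
              ≤ κb * (3 * |u|) := mul_le_mul_of_nonneg_left hGd hκb.le
            _ = 3 * κb * |u| := by ring
        have t2 : |(-(μb * (φ₁ x * w)) - μb * (y₂ x * u) - βb * w)|
            ≤ μb * |w| + μb * My * |u| + βb * |w| := by
          have hφ₁abs : |φ₁ x| ≤ 1 := by rw [abs_of_pos hφ₁x]; exact hφ₁1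
          have hy₂abs : |y₂ x| ≤ My := by rw [abs_of_nonneg hy₂nn]; exact hy₂M
          have s1 : |μb * (φ₁ x * w)| ≤ μb * |w| := by
            have := abs_mul_mul_le hμb hφ₁abs (c := w)
            linarith
          have s2 : |μb * (y₂ x * u)| ≤ μb * My * |u| := abs_mul_mul_le hμb hy₂abs
          have s3 : |βb * w| = βb * |w| := by rw [abs_mul, abs_of_pos hβb]
          calc |(-(μb * (φ₁ x * w)) - μb * (y₂ x * u) - βb * w)|
              ≤ |(-(μb * (φ₁ x * w)) - μb * (y₂ x * u))| + |βb * w| := abs_sub _ _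
            _ ≤ |μb * (φ₁ x * w)| + |μb * (y₂ x * u)| + |βb * w| := by
                have h := abs_sub (-(μb * (φ₁ x * w))) (μb * (y₂ x * u))
                rw [abs_neg] at h
                linarith
            _ ≤ μb * |w| + μb * My * |u| + βb * |w| := by
                rw [s3] at *
                linarith
        calc |κb * (φ₁ x / (1 + φ₁ x) * (1 - φ₁ x) - φ₂ x / (1 + φ₂ x) * (1 - φ₂ x))
              + (-(μb * (φ₁ x * w)) - μb * (y₂ x * u) - βb * w)|
            ≤ |κb * (φ₁ x / (1 + φ₁ x) * (1 - φ₁ x) - φ₂ x / (1 + φ₂ x) * (1 - φ₂ x))|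
              + |(-(μb * (φ₁ x * w)) - μb * (y₂ x * u) - βb * w)| := abs_add_le _ _
          _ ≤ 3 * κb * |u| + (μb * |w| + μb * My * |u| + βb * |w|) := add_le_add t1 t2
          _ = 3 * κb * |u| + μb * |w| + μb * My * |u| + βb * |w| := by ring
      -- assemble
      have hgx : 0 ≤ g x := abs_nonneg _
      have hBpos : 0 < B x := by
        have h1 : 0 ≤ μs * Real.exp (K * x) * P x := by
          have := hPnn x hxI
          positivity
        have h2 : 0 < ε * Real.exp (K * x) := by positivity
        simp only [hB]
        linarith
      have hcomb : |u| + |w| ≤ 2 * B x := by linarith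
      have m1 : μb * |w| ≤ μb * B x := mul_le_mul_of_nonneg_left hwB hμb
      have m2 : μb * My * |u| ≤ μb * My * B x :=
        mul_le_mul_of_nonneg_left huB (mul_nonneg hμb hMy0)
      have m3 : μs * Ms * |u| ≤ μs * Ms * B x :=
        mul_le_mul_of_nonneg_left huB (mul_nonneg hμs hMs)
      have m4 : 3 * κb * |u| ≤ 3 * κb * B x :=
        mul_le_mul_of_nonneg_left huB (by positivity)
      have m5 : βb * |w| ≤ βb * B x := mul_le_mul_of_nonneg_left hwB hβb.le
      have hco1 : μb + μb * My + μs * Ms ≤ K₀ := by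
        simp only [hK₀]
        nlinarith [hκb.le, hβb.le]
      have hco2 : 3 * κb + μb + μb * My + βb ≤ K₀ := by
        simp only [hK₀]
        nlinarith [mul_nonneg hμs hMs]
      have hcoef1 : μb * B x + μb * My * B x + μs * Ms * B x ≤ K₀ * B x := by
        calc μb * B x + μb * My * B x + μs * Ms * B x
            = (μb + μb * My + μs * Ms) * B x := by ring
          _ ≤ K₀ * B x := mul_le_mul_of_nonneg_right hco1 hBpos.le
      have hcoef2 : 3 * κb * B x + μb * B x + μb * My * B x + βb * B x ≤ K₀ * B x := by
        calc 3 * κb * B x + μb * B x + μb * My * B x + βb * B x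
            = (3 * κb + μb + μb * My + βb) * B x := by ring
          _ ≤ K₀ * B x := mul_le_mul_of_nonneg_right hco2 hBpos.le
      have hbound1 : |(-(μb * φ₁ x * y₁ x) - μs * φ₁ x * c₁ x)
          - (-(μb * φ₂ x * y₂ x) - μs * φ₂ x * c₂ x)| ≤ K₀ * B x + μs * g x := by
        linarith [hu']
      have hbound2 : |(κb * (φ₁ x / (1 + φ₁ x)) * (1 - φ₁ x) - (μb * φ₁ x + βb) * y₁ x)
          - (κb * (φ₂ x / (1 + φ₂ x)) * (1 - φ₂ x) - (μb * φ₂ x + βb) * y₂ x)|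
          ≤ K₀ * B x + μs * g x := by
        have hμsg : 0 ≤ μs * g x := mul_nonneg hμs hgx
        calc |(κb * (φ₁ x / (1 + φ₁ x)) * (1 - φ₁ x) - (μb * φ₁ x + βb) * y₁ x)
            - (κb * (φ₂ x / (1 + φ₂ x)) * (1 - φ₂ x) - (μb * φ₂ x + βb) * y₂ x)|
            ≤ 3 * κb * |u| + μb * |w| + μb * My * |u| + βb * |w| := hw'
          _ ≤ 3 * κb * B x + μb * B x + μb * My * B x + βb * B x :=
              add_le_add (add_le_add (add_le_add m4 m1) m2) m5
          _ ≤ K₀ * B x := hcoef2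
          _ ≤ K₀ * B x + μs * g x := le_add_of_nonneg_right hμsg
      have hnorm : ‖((-(μb * φ₁ x * y₁ x) - μs * φ₁ x * c₁ x)
          - (-(μb * φ₂ x * y₂ x) - μs * φ₂ x * c₂ x),
          (κb * (φ₁ x / (1 + φ₁ x)) * (1 - φ₁ x) - (μb * φ₁ x + βb) * y₁ x)
            - (κb * (φ₂ x / (1 + φ₂ x)) * (1 - φ₂ x) - (μb * φ₂ x + βb) * y₂ x))‖
          ≤ K₀ * B x + μs * g x := by
        rw [Prod.norm_def]
        simp only [Real.norm_eq_abs]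
        exact max_le hbound1 hbound2
      refine lt_of_le_of_lt hnorm ?_
      -- K₀ * B x + μs * g x < B' x
      have hexp1 : 1 ≤ Real.exp (K * x) := by
        rw [← Real.exp_zero]
        apply Real.exp_le_exp.mpr
        exact mul_nonneg hK0 hx.1
      have hBx : B' x = K * B x + μs * Real.exp (K * x) * g x := by
        simp only [hB', hB]
        ring
      rw [hBx]
      have h1 : μs * g x ≤ μs * Real.exp (K * x) * g x := by
        calc μs * g x = μs * g x * 1 := by ring
          _ ≤ μs * g x * Real.exp (K * x) :=
            mul_le_mul_of_nonneg_left hexp1 (mul_nonneg hμs hgx)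
          _ = μs * Real.exp (K * x) * g x := by ring
      have h2 : K * B x = K₀ * B x + B x := by rw [hKdef]; ring
      linarith
    have := image_norm_le_of_norm_deriv_right_lt_deriv_boundary' hfc hfd ha0 hBc hBd bound ht
    simpa only [hB] using this
  -- pass to the limit ε → 0
  have hfinal : ‖f t‖ ≤ μs * Real.exp (K * T) * P t := by
    apply le_of_forall_pos_le_add
    intro ε' hε'
    have hexpT : 0 < Real.exp (K * T) := Real.exp_pos _
    have h1 := key (ε' / Real.exp (K * T)) (by positivity)
    have hexp_le : Real.exp (K * t) ≤ Real.exp (K * T) :=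
      Real.exp_le_exp.mpr (mul_le_mul_of_nonneg_left ht.2 hK0)
    have h2 : μs * Real.exp (K * t) * P t ≤ μs * Real.exp (K * T) * P t :=
      mul_le_mul_of_nonneg_right (mul_le_mul_of_nonneg_left hexp_le hμs) (hPnn t ht)
    have h3 : ε' / Real.exp (K * T) * Real.exp (K * t) ≤ ε' := by
      rw [div_mul_eq_mul_div]
      rw [div_le_iff₀ hexpT]
      nlinarith
    linarith
  have habs : |φ₁ t - φ₂ t| + |y₁ t - y₂ t| ≤ 2 * ‖f t‖ := by
    have h1 : |φ₁ t - φ₂ t| ≤ ‖f t‖ := by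
      rw [Prod.norm_def]
      exact le_trans (le_of_eq (Real.norm_eq_abs _).symm) (le_max_left _ _)
    have h2 : |y₁ t - y₂ t| ≤ ‖f t‖ := by
      rw [Prod.norm_def]
      exact le_trans (le_of_eq (Real.norm_eq_abs _).symm) (le_max_right _ _)
    linarith
  calc |φ₁ t - φ₂ t| + |y₁ t - y₂ t| ≤ 2 * ‖f t‖ := habs
    _ ≤ 2 * (μs * Real.exp (K * T) * P t) := by linarith
    _ = C * P t := by rw [hC]; ring
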